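/- Let m, n ≥ 1 be integers and μ ≥ 1/2. Let ω = (ω₁, …, ω_m) ∈ ℂ^m and λ : ℕ → ℝ, and for τ ∈ ℤ^m, j ≥ 1 and 1 ≤ r ≤ m set σ_r(τ, j) := τ_r + ω_r λ_j and ‖σ(τ, j)‖ := max_{1 ≤ r ≤ m} |σ_r(τ, j)|. Assume that the set N = {(τ, j) ∈ ℤ^m × ℕ : σ_r(τ, j) = 0 for all r} is finite, and that there exists σ₀ > 1 such that for every σ' ≥ σ₀ and every ε > 0 there exists C_ε > 0 with ‖σ(τ, j)‖ ≥ C_ε · exp(−ε(‖τ‖^{1/σ'} + j^{1/(2nμ)})) for all (τ, j) with ‖σ(τ, j)‖ ≠ 0. Let σ̃ > 1 and let û, f̂₁, …, f̂_m : ℤ^m × ℕ → ℂ be functions satisfying σ_r(τ, j) · û(τ, j) = f̂_r(τ, j) for all r, τ, j, and suppose there exist ε₀ > 0 and C₀ > 0 such that |f̂_r(τ, j)| ≤ C₀ · exp(−ε₀(‖τ‖^{1/σ̃} + j^{1/(2nμ)})) for all r, τ, j. Then there exist ε₁ > 0 and C₁ > 0 such that |û(τ, j)| ≤ C₁ ·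 exp(−ε₁(‖τ‖^{1/σ̃} + j^{1/(2nμ)})) for all (τ, j) ∈ ℤ^m × ℕ. -/

import Mathlib

/-- Sufficiency part of the hypoellipticity criterion for time-independent systems,
in Fourier-coefficient form: finiteness of the zero set of the symbol together with the
Diophantine lower bound imply Gelfand–Shilov decay of the solution coefficients. -/
theorem stmt3 (m n : ℕ) (hm : 1 ≤ m) (hn : 1 ≤ n) (μ : ℝ) (hμ : 1 / 2 ≤ μ)
    (ω : Fin m → ℂ) (lam : ℕ → ℝ)
    (hfin : {p : (Fin m → ℤ) × ℕ | 1 ≤ p.2 ∧ ∀ r, (p.1 r : ℂ) + ω r * lam p.2 = 0}.Finite)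
    (hdio : ∃ σ₀ : ℝ, 1 < σ₀ ∧ ∀ σ' : ℝ, σ₀ ≤ σ' → ∀ ε : ℝ, 0 < ε → ∃ Cε : ℝ, 0 < Cε ∧
      ∀ (τ : Fin m → ℤ) (j : ℕ), 1 ≤ j →
        (⨆ r, ‖(τ r : ℂ) + ω r * lam j‖) ≠ 0 →
        Cε * Real.exp (-ε * ((⨆ r, |(τ r : ℝ)|) ^ (1 / σ') + (j : ℝ) ^ (1 / (2 * n * μ)))) ≤
          ⨆ r, ‖(τ r : ℂ) + ω r * lam j‖)
    (σt : ℝ) (hσt : 1 < σt)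
    (u : (Fin m → ℤ) → ℕ → ℂ) (f : Fin m → (Fin m → ℤ) → ℕ → ℂ)
    (heq : ∀ (r : Fin m) (τ : Fin m → ℤ) (j : ℕ), 1 ≤ j →
      ((τ r : ℂ) + ω r * lam j) * u τ j = f r τ j)
    (ε₀ C₀ : ℝ) (hε₀ : 0 < ε₀) (hC₀ : 0 < C₀)
    (hf : ∀ (r : Fin m) (τ : Fin m → ℤ) (j : ℕ), 1 ≤ j →
      ‖f r τ j‖ ≤
        C₀ * Real.exp (-ε₀ * ((⨆ r', |(τ r' : ℝ)|) ^ (1 / σt) + (j : ℝ) ^ (1 / (2 * n * μ))))) :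
    ∃ ε₁ C₁ : ℝ, 0 < ε₁ ∧ 0 < C₁ ∧ ∀ (τ : Fin m → ℤ) (j : ℕ), 1 ≤ j →
      ‖u τ j‖ ≤
        C₁ * Real.exp (-ε₁ * ((⨆ r, |(τ r : ℝ)|) ^ (1 / σt) + (j : ℝ) ^ (1 / (2 * n * μ)))) := by
  haveI : NeZero m := ⟨by omega⟩
  haveI : Nonempty (Fin m) := ⟨⟨0, by omega⟩⟩
  obtain ⟨σ₀, hσ₀, hd⟩ := hdio
  set σ' : ℝ := max σ₀ σt with hσ'def
  have hσ'₀ : σ₀ ≤ σ' := le_max_left _ _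
  obtain ⟨Cε, hCε, hb⟩ := hd σ' hσ'₀ (ε₀ / 2) (by positivity)
  -- notation
  set A : (Fin m → ℤ) → ℕ → ℝ := fun τ j =>
    (⨆ r, |(τ r : ℝ)|) ^ (1 / σt) + (j : ℝ) ^ (1 / (2 * n * μ)) with hAdef
  set g : ((Fin m → ℤ) × ℕ) → ℝ := fun p =>
    ‖u p.1 p.2‖ * Real.exp (ε₀ / 2 * A p.1 p.2) with hgdef
  obtain ⟨M, hM⟩ := (hfin.image g).bddAbove
  refine ⟨ε₀ / 2, max (C₀ / Cε) (max M 1), by positivity,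
    lt_of_lt_of_le one_pos (le_trans (le_max_right _ _) (le_max_right _ _)), ?_⟩
  set C₁ : ℝ := max (C₀ / Cε) (max M 1) with hC₁def
  have hC₁M : M ≤ C₁ := le_trans (le_max_left _ _) (le_max_right _ _)
  have hC₁C : C₀ / Cε ≤ C₁ := le_max_left _ _
  intro τ j hj
  have hTnn : (0:ℝ) ≤ ⨆ r, |(τ r : ℝ)| :=
    le_trans (abs_nonneg _) (le_ciSup (f := fun r => |(τ r : ℝ)|) (Set.finite_range _).bddAbove (Classical.arbitrary _))
  by_cases hz : ∀ r, (τ r : ℂ) + ω r * lam j = 0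
  · -- exceptional finite set
    have hmem : ((τ, j) : (Fin m → ℤ) × ℕ) ∈
        {p : (Fin m → ℤ) × ℕ | 1 ≤ p.2 ∧ ∀ r, (p.1 r : ℂ) + ω r * lam p.2 = 0} := ⟨hj, hz⟩
    have hgM : g (τ, j) ≤ M := hM (Set.mem_image_of_mem g hmem)
    have key : ‖u τ j‖ = g (τ, j) * Real.exp (-(ε₀ / 2) * A τ j) := by
      rw [hgdef]
      simp only []
      rw [mul_assoc, ← Real.exp_add, show ε₀ / 2 * A τ j + -(ε₀ / 2) * A τ j = 0 by ring,
        Real.exp_zero, mul_one]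
    rw [key]
    exact mul_le_mul_of_nonneg_right (le_trans hgM hC₁M) (Real.exp_nonneg _)
  · push_neg at hz
    obtain ⟨r₁, hr₁⟩ := hz
    set S : ℝ := ⨆ r, ‖(τ r : ℂ) + ω r * lam j‖ with hSdef
    have hSpos : 0 < S :=
      lt_of_lt_of_le (norm_pos_iff.mpr hr₁) (le_ciSup (f := fun r => ‖(τ r : ℂ) + ω r * lam j‖) (Set.finite_range _).bddAbove r₁)
    have hlow : Cε * Real.exp (-(ε₀ / 2) * A τ j) ≤ S := by
      refine le_trans ?_ (hb τ j hj hSpos.ne')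
      have hexp : (⨆ r, |(τ r : ℝ)|) ^ (1 / σ') ≤ (⨆ r, |(τ r : ℝ)|) ^ (1 / σt) := by
        rcases eq_or_lt_of_le hTnn with hT0 | hTpos
        · rw [← hT0, Real.zero_rpow (by positivity), Real.zero_rpow (by positivity)]
        · have hT1 : (1:ℝ) ≤ ⨆ r, |(τ r : ℝ)| := by
            by_contra hlt
            push_neg at hlt
            have hall : ∀ r, τ r = 0 := by
              intro r
              by_contra hr0
              have h1 : (1:ℝ) ≤ |(τ r : ℝ)| := by
                rw [← Int.cast_abs]
                exact_mod_cast Int.one_le_abs hr0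
              exact absurd (le_trans h1 (le_ciSup (f := fun r => |(τ r : ℝ)|) (Set.finite_range _).bddAbove r))
                (not_le.mpr hlt)
            have : (⨆ r, |(τ r : ℝ)|) = 0 := by
              have : (fun r => |(τ r : ℝ)|) = fun _ => (0:ℝ) := by
                funext r; simp [hall r]
              rw [this, ciSup_const]
            exact absurd this hTpos.ne'
          exact Real.rpow_le_rpow_of_exponent_le hT1
            (one_div_le_one_div_of_le (by linarith) (le_max_right _ _))
      have : -(ε₀ / 2) * A τ j ≤ -(ε₀ / 2) * ((⨆ r, |(τ r : ℝ)|) ^ (1 / σ') +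
          (j : ℝ) ^ (1 / (2 * n * μ))) := by
        rw [hAdef]
        nlinarith [Real.exp_pos (1:ℝ)]
      exact mul_le_mul_of_nonneg_left (Real.exp_le_exp.mpr this) hCε.le
    -- bound S * |u|
    have hu0 : (0:ℝ) ≤ ‖u τ j‖ := norm_nonneg _
    rcases eq_or_lt_of_le hu0 with hu | hu
    · rw [← hu]; positivity
    · have hS_le : S ≤ C₀ * Real.exp (-ε₀ * A τ j) / ‖u τ j‖ := by
        refine ciSup_le fun r => ?_
        rw [le_div_iff₀ hu, ← norm_mul, heq r τ j hj]
        exact hf r τ j hj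
      have h1 : ‖u τ j‖ * (Cε * Real.exp (-(ε₀ / 2) * A τ j)) ≤
          C₀ * Real.exp (-ε₀ * A τ j) := by
        calc ‖u τ j‖ * (Cε * Real.exp (-(ε₀ / 2) * A τ j))
            ≤ ‖u τ j‖ * S := mul_le_mul_of_nonneg_left hlow hu0
          _ ≤ C₀ * Real.exp (-ε₀ * A τ j) := by
              rw [mul_comm, ← le_div_iff₀ hu]; exact hS_le
      have h2 : C₀ * Real.exp (-ε₀ * A τ j) ≤
          (C₁ * Real.exp (-(ε₀ / 2) * A τ j)) * (Cε * Real.exp (-(ε₀ / 2) * A τ j)) := by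
        have hC : C₀ ≤ C₁ * Cε := by
          rw [← div_le_iff₀ hCε] at *
          exact hC₁C
        calc C₀ * Real.exp (-ε₀ * A τ j) ≤ (C₁ * Cε) * Real.exp (-ε₀ * A τ j) :=
              mul_le_mul_of_nonneg_right hC (Real.exp_nonneg _)
          _ = (C₁ * Real.exp (-(ε₀ / 2) * A τ j)) * (Cε * Real.exp (-(ε₀ / 2) * A τ j)) := by
              rw [mul_mul_mul_comm, ← Real.exp_add,
                show -(ε₀ / 2) * A τ j + -(ε₀ / 2) * A τ j = -ε₀ * A τ j by ring]
      have := le_trans h1 h2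
      exact le_of_mul_le_mul_right this (by positivity)
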